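/- The function φ(t) = √t is a 1-pseudomultiplier of the Sobolev space W = H¹(0,1): for every f ∈ W with f(0) = 0, the product √t · f(t) belongs to W. -/

import Mathlib

open MeasureTheory

private lemma aux_sqrt_int {y t : ℝ} (hy : 0 < y) (hyt : y < t) :
    ∫ x in Set.Ioo y t, (2 * Real.sqrt x)⁻¹ = Real.sqrt t - Real.sqrt y := by
  rw [← integral_Ioc_eq_integral_Ioo, ← intervalIntegral.integral_of_le hyt.le]
  have hcong : ∀ x ∈ Set.uIcc y t, (2 * Real.sqrt x)⁻¹ = 2⁻¹ * x ^ (-(1/2) : ℝ) := by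
    intro x hx
    rw [Set.uIcc_of_le hyt.le] at hx
    have hx0 : 0 < x := lt_of_lt_of_le hy hx.1
    rw [Real.sqrt_eq_rpow, mul_inv, ← Real.rpow_neg hx0.le]
  rw [intervalIntegral.integral_congr hcong]
  rw [intervalIntegral.integral_const_mul, integral_rpow (Or.inl (by norm_num))]
  rw [Real.sqrt_eq_rpow, Real.sqrt_eq_rpow]
  norm_num
  ring

private lemma aux_holder (g₁ : ℝ → ℂ)
    (hg₁ : MemLp g₁ 2 (volume.restrict (Set.Ioo (0:ℝ) 1))) {x : ℝ}
    (hx : x ∈ Set.Ioo (0:ℝ) 1) :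
    ∫ y in Set.Ioo (0:ℝ) x, ‖g₁ y‖ ≤
      Real.sqrt x * (∫ y in Set.Ioo (0:ℝ) 1, ‖g₁ y‖ ^ (2:ℝ)) ^ ((1:ℝ)/2) := by
  haveI : IsFiniteMeasure (volume.restrict (Set.Ioo (0:ℝ) x)) :=
    ⟨by rw [Measure.restrict_apply_univ]; simp [Real.volume_Ioo]⟩
  have hsub : Set.Ioo (0:ℝ) x ⊆ Set.Ioo (0:ℝ) 1 := Set.Ioo_subset_Ioo le_rfl hx.2.le
  have hle : volume.restrict (Set.Ioo (0:ℝ) x) ≤ volume.restrict (Set.Ioo (0:ℝ) 1) :=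
    Measure.restrict_mono hsub le_rfl
  have hpq : (2:ℝ).HolderConjugate 2 := Real.holderConjugate_iff.mpr ⟨one_lt_two, by norm_num⟩
  have h2 : (ENNReal.ofReal (2:ℝ)) = 2 := by simp [ENNReal.ofReal_ofNat]
  have hmemg : MemLp (fun y => ‖g₁ y‖) (ENNReal.ofReal (2:ℝ))
      (volume.restrict (Set.Ioo (0:ℝ) x)) := by
    rw [h2]; exact (hg₁.norm).mono_measure hle
  have hmem1 : MemLp (fun _ : ℝ => (1:ℝ)) (ENNReal.ofReal (2:ℝ))
      (volume.restrict (Set.Ioo (0:ℝ) x)) := memLp_const 1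
  have key := integral_mul_le_Lp_mul_Lq_of_nonneg hpq
    (Filter.Eventually.of_forall fun _ => zero_le_one)
    (Filter.Eventually.of_forall fun y => norm_nonneg (g₁ y)) hmem1 hmemg
  simp only [one_mul] at key
  have h1 : (∫ _ in Set.Ioo (0:ℝ) x, (1:ℝ) ^ (2:ℝ)) = x := by
    simp [Real.volume_Ioo, ENNReal.toReal_ofReal hx.1.le, hx.1.le]
  rw [h1] at key
  have hxg : (x : ℝ) ^ ((1:ℝ)/2) = Real.sqrt x := by
    rw [Real.sqrt_eq_rpow]
  refine key.trans ?_
  rw [hxg]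
  refine mul_le_mul_of_nonneg_left ?_ (Real.sqrt_nonneg x)
  have hint : IntegrableOn (fun y => ‖g₁ y‖ ^ (2:ℝ)) (Set.Ioo (0:ℝ) 1) volume := by
    have := hg₁.integrable_norm_rpow two_ne_zero ENNReal.ofNat_ne_top
    simpa [ENNReal.toReal_ofNat, IntegrableOn] using this
  have := setIntegral_mono_set hint
    (Filter.Eventually.of_forall fun y => Real.rpow_nonneg (norm_nonneg _) _)
    (HasSubset.Subset.eventuallyLE hsub)
  exact Real.rpow_le_rpow (integral_nonneg fun y => Real.rpow_nonneg (norm_nonneg _) _)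
    this one_half_pos.le

private lemma aux_fubini (f g₁ : ℝ → ℂ) (hg₁m : StronglyMeasurable g₁)
    (hgi : IntegrableOn g₁ (Set.Ioo (0:ℝ) 1) volume)
    (hac₁ : ∀ s ∈ Set.Icc (0:ℝ) 1, f s = ∫ x in Set.Ioo (0:ℝ) s, g₁ x)
    {t : ℝ} (ht : t ∈ Set.Icc (0:ℝ) 1) :
    ∫ x in Set.Ioo (0:ℝ) t, (((2*Real.sqrt x)⁻¹ : ℝ) : ℂ) * f x
      = ∫ y in Set.Ioo (0:ℝ) t, ((Real.sqrt t - Real.sqrt y : ℝ) : ℂ) * g₁ y := by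
  set μt := volume.restrict (Set.Ioo (0:ℝ) t) with hμt
  set F : ℝ → ℝ → ℂ := fun x y => if y < x then (((2*Real.sqrt x)⁻¹ : ℝ) : ℂ) * g₁ y else 0
    with hF
  have hsub : Set.Ioo (0:ℝ) t ⊆ Set.Ioo (0:ℝ) 1 := Set.Ioo_subset_Ioo le_rfl ht.2
  have hmsq : Measurable fun x : ℝ => (2 * Real.sqrt x)⁻¹ :=
    (Real.continuous_sqrt.measurable.const_mul 2).inv
  have hFmeas : StronglyMeasurable (Function.uncurry F) := by
    apply StronglyMeasurable.ite (measurableSet_lt measurable_snd measurable_fst)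
    · exact (((Complex.measurable_ofReal.comp hmsq).comp
        measurable_fst).stronglyMeasurable.mul (hg₁m.comp_measurable measurable_snd))
    · exact stronglyMeasurable_const
  have hgi_t : Integrable g₁ μt := hgi.mono_set hsub
  have hsq : Integrable (fun x => (2 * Real.sqrt x)⁻¹) μt := by
    have h0 : IntegrableOn (fun x : ℝ => x ^ (-(1/2) : ℝ)) (Set.Ioc 0 t) volume := by
      rcases le_or_gt t 0 with h | h
      · rw [Set.Ioc_eq_empty (not_lt.2 h)]; exact integrableOn_empty
      · exact intervalIntegrable_iff_integrableOn_Ioc_of_le h.le |>.1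
          (intervalIntegral.intervalIntegrable_rpow' (by norm_num))
    have h1 : IntegrableOn (fun x : ℝ => 2⁻¹ * x ^ (-(1/2) : ℝ)) (Set.Ioo 0 t) volume :=
      ((h0.mono_set Set.Ioo_subset_Ioc_self).const_mul _)
    refine h1.congr_fun ?_ measurableSet_Ioo
    intro x hx
    exact (by rw [Real.sqrt_eq_rpow, mul_inv, ← Real.rpow_neg hx.1.le] :
      ((2:ℝ)*Real.sqrt x)⁻¹ = 2⁻¹ * x ^ (-(1/2):ℝ)).symm
  have hFint : Integrable (Function.uncurry F) (μt.prod μt) := by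
    refine Integrable.mono' (Integrable.mul_prod hsq.norm hgi_t.norm)
      hFmeas.aestronglyMeasurable ?_
    refine Filter.Eventually.of_forall fun p => ?_
    simp only [Function.uncurry, hF]
    split_ifs with hp
    · rw [norm_mul, Complex.norm_real]
    · rw [norm_zero]; positivity
  have swap := integral_integral_swap hFint
  have hL : (∫ x, ∫ y, F x y ∂μt ∂μt)
      = ∫ x in Set.Ioo (0:ℝ) t, (((2*Real.sqrt x)⁻¹ : ℝ) : ℂ) * f x := by
    refine setIntegral_congr_fun measurableSet_Ioo fun x hx => ?_
    have : (fun y => F x y) = (Set.Iio x).indicator (fun y => (((2*Real.sqrt x)⁻¹:ℝ):ℂ) * g₁ y) := by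
      funext y; simp [hF, Set.indicator_apply, Set.mem_Iio]
    rw [this, setIntegral_indicator measurableSet_Iio, Set.Ioo_inter_Iio,
      min_eq_right hx.2.le, integral_const_mul, ← hac₁ x ⟨hx.1.le, hx.2.le.trans ht.2⟩]
  have hR : (∫ y, ∫ x, F x y ∂μt ∂μt)
      = ∫ y in Set.Ioo (0:ℝ) t, ((Real.sqrt t - Real.sqrt y : ℝ) : ℂ) * g₁ y := by
    refine setIntegral_congr_fun measurableSet_Ioo fun y hy => ?_
    have : (fun x => F x y) = (Set.Ioi y).indicator (fun x => (((2*Real.sqrt x)⁻¹:ℝ):ℂ) * g₁ y) := by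
      funext x; simp [hF, Set.indicator_apply, Set.mem_Ioi]
    rw [this, setIntegral_indicator measurableSet_Ioi, Set.Ioo_inter_Ioi,
      max_eq_right hy.1.le, integral_mul_const]
    congr 1
    rw [← aux_sqrt_int hy.1 hy.2]
    exact integral_ofReal
  rw [← hL, ← hR, swap]

/-- `φ(t) = √t` is a 1-pseudomultiplier of the Sobolev space `W = H¹(0,1)`:
if `f ∈ W` with `f(0) = 0` (i.e. `f` is absolutely continuous on `[0,1]` with
`f(t) = ∫₀ᵗ g` for some `g ∈ L²(0,1)`, and `f ∈ L²(0,1)`), then the product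
`t ↦ √t · f(t)` again belongs to `W`: it is square-integrable and absolutely continuous
on `[0,1]` with a square-integrable derivative. -/
theorem stmt9 (f g : ℝ → ℂ)
    (hf : MemLp f 2 (volume.restrict (Set.Ioo (0:ℝ) 1)))
    (hg : MemLp g 2 (volume.restrict (Set.Ioo (0:ℝ) 1)))
    (hac : ∀ t ∈ Set.Icc (0:ℝ) 1, f t = ∫ x in (0:ℝ)..t, g x) :
    MemLp (fun t => (Real.sqrt t : ℂ) * f t) 2 (volume.restrict (Set.Ioo (0:ℝ) 1)) ∧
    ∃ h : ℝ → ℂ, MemLp h 2 (volume.restrict (Set.Ioo (0:ℝ) 1)) ∧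
      ∀ t ∈ Set.Icc (0:ℝ) 1, (Real.sqrt t : ℂ) * f t = ∫ x in (0:ℝ)..t, h x := by
  haveI hfin : IsFiniteMeasure (volume.restrict (Set.Ioo (0:ℝ) 1)) :=
    ⟨by rw [Measure.restrict_apply_univ]; simp [Real.volume_Ioo]⟩
  -- measurable representative of g
  set g₁ : ℝ → ℂ := hg.1.mk g with hg₁def
  have hg₁m : StronglyMeasurable g₁ := hg.1.stronglyMeasurable_mk
  have hgg₁ : g =ᵐ[volume.restrict (Set.Ioo (0:ℝ) 1)] g₁ := hg.1.ae_eq_mk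
  have hg₁ : MemLp g₁ 2 (volume.restrict (Set.Ioo (0:ℝ) 1)) := hg.ae_eq hgg₁
  have hgi : IntegrableOn g₁ (Set.Ioo (0:ℝ) 1) volume := hg₁.integrable one_le_two
  -- hac in terms of g₁ and set integrals over Ioo
  have hac₁ : ∀ t ∈ Set.Icc (0:ℝ) 1, f t = ∫ x in Set.Ioo (0:ℝ) t, g₁ x := by
    intro t ht
    rw [hac t ht, intervalIntegral.integral_of_le ht.1, integral_Ioc_eq_integral_Ioo]
    refine setIntegral_congr_ae measurableSet_Ioo ?_
    have hle : volume.restrict (Set.Ioo (0:ℝ) t) ≤ volume.restrict (Set.Ioo (0:ℝ) 1) :=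
      Measure.restrict_mono (Set.Ioo_subset_Ioo le_rfl ht.2) le_rfl
    have h2 : g =ᵐ[volume.restrict (Set.Ioo (0:ℝ) t)] g₁ := Filter.Eventually.filter_mono
      (ae_mono hle) hgg₁
    filter_upwards [(ae_restrict_iff' measurableSet_Ioo).1 h2] with x hx hx2 using hx hx2
  -- the constant controlling `‖f x‖ / √x`
  set C : ℝ := (∫ y in Set.Ioo (0:ℝ) 1, ‖g₁ y‖ ^ (2:ℝ)) ^ ((1:ℝ)/2) with hC
  have hC0 : 0 ≤ C := Real.rpow_nonneg
    (integral_nonneg fun y => Real.rpow_nonneg (norm_nonneg _) _) _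
  -- pointwise bound for the singular part
  have hbound : ∀ x ∈ Set.Ioo (0:ℝ) 1, ‖(((2*Real.sqrt x)⁻¹ : ℝ) : ℂ) * f x‖ ≤ C / 2 := by
    intro x hx
    have hsx : 0 < Real.sqrt x := Real.sqrt_pos.2 hx.1
    have h1 : ‖f x‖ ≤ ∫ y in Set.Ioo (0:ℝ) x, ‖g₁ y‖ := by
      rw [hac₁ x ⟨hx.1.le, hx.2.le⟩]
      exact norm_integral_le_integral_norm _
    have h2 := aux_holder g₁ hg₁ hx
    rw [norm_mul, Complex.norm_real, Real.norm_of_nonneg (by positivity)]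
    calc (2*Real.sqrt x)⁻¹ * ‖f x‖ ≤ (2*Real.sqrt x)⁻¹ * (Real.sqrt x * C) := by
          exact mul_le_mul_of_nonneg_left (h1.trans h2) (by positivity)
      _ = C / 2 := by field_simp
  -- the candidate derivative
  set h : ℝ → ℂ := fun x =>
    ((Real.sqrt x : ℝ) : ℂ) * g₁ x + (((2*Real.sqrt x)⁻¹ : ℝ) : ℂ) * f x with hh
  have hmsq : Measurable fun x : ℝ => (2 * Real.sqrt x)⁻¹ :=
    (Real.continuous_sqrt.measurable.const_mul 2).inv
  have hs2meas : AEStronglyMeasurable (fun x => (((2*Real.sqrt x)⁻¹ : ℝ) : ℂ) * f x)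
      (volume.restrict (Set.Ioo (0:ℝ) 1)) :=
    ((Complex.measurable_ofReal.comp hmsq).aestronglyMeasurable).mul hf.1
  have hsqrtmeas : AEStronglyMeasurable (fun x : ℝ => ((Real.sqrt x : ℝ) : ℂ))
      (volume.restrict (Set.Ioo (0:ℝ) 1)) :=
    (Complex.measurable_ofReal.comp Real.continuous_sqrt.measurable).aestronglyMeasurable
  -- membership in L² of the three relevant products
  have hmem1 : MemLp (fun t => (Real.sqrt t : ℂ) * f t) 2
      (volume.restrict (Set.Ioo (0:ℝ) 1)) := by
    refine MemLp.of_le hf (hsqrtmeas.mul hf.1) ?_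
    filter_upwards [ae_restrict_mem measurableSet_Ioo] with x hx
    rw [norm_mul, Complex.norm_real, Real.norm_of_nonneg (Real.sqrt_nonneg _)]
    exact mul_le_of_le_one_left (norm_nonneg _) (Real.sqrt_le_one.mpr hx.2.le)
  have hmems1 : MemLp (fun x => ((Real.sqrt x : ℝ) : ℂ) * g₁ x) 2
      (volume.restrict (Set.Ioo (0:ℝ) 1)) := by
    refine MemLp.of_le hg₁ (hsqrtmeas.mul hg₁m.aestronglyMeasurable) ?_
    filter_upwards [ae_restrict_mem measurableSet_Ioo] with x hx
    rw [norm_mul, Complex.norm_real, Real.norm_of_nonneg (Real.sqrt_nonneg _)]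
    exact mul_le_of_le_one_left (norm_nonneg _) (Real.sqrt_le_one.mpr hx.2.le)
  have hmems2 : MemLp (fun x => (((2*Real.sqrt x)⁻¹ : ℝ) : ℂ) * f x) 2
      (volume.restrict (Set.Ioo (0:ℝ) 1)) := by
    refine MemLp.of_bound hs2meas (C/2) ?_
    filter_upwards [ae_restrict_mem measurableSet_Ioo] with x hx
    exact hbound x hx
  have hmemh : MemLp h 2 (volume.restrict (Set.Ioo (0:ℝ) 1)) := hmems1.add hmems2
  refine ⟨hmem1, h, hmemh, ?_⟩
  -- the fundamental theorem of calculus identity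
  intro t ht
  have hsub : Set.Ioo (0:ℝ) t ⊆ Set.Ioo (0:ℝ) 1 := Set.Ioo_subset_Ioo le_rfl ht.2
  set μt := volume.restrict (Set.Ioo (0:ℝ) t) with hμt
  haveI : IsFiniteMeasure μt := by
    constructor
    rw [hμt, Measure.restrict_apply_univ]
    exact lt_of_le_of_lt (measure_mono hsub) (by simp [Real.volume_Ioo])
  have hgi_t : Integrable g₁ μt := hgi.mono_set hsub
  -- integrability of the two parts
  have hint1 : Integrable (fun x => ((Real.sqrt x : ℝ) : ℂ) * g₁ x) μt := by
    refine Integrable.mono' hgi_t.norm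
      ((hsqrtmeas.mono_measure (Measure.restrict_mono hsub le_rfl)).mul
        hg₁m.aestronglyMeasurable) ?_
    filter_upwards [ae_restrict_mem measurableSet_Ioo] with x hx
    rw [norm_mul, Complex.norm_real, Real.norm_of_nonneg (Real.sqrt_nonneg _)]
    exact mul_le_of_le_one_left (norm_nonneg _)
      (Real.sqrt_le_one.mpr (hx.2.le.trans ht.2))
  have hint2 : Integrable (fun x => (((2*Real.sqrt x)⁻¹ : ℝ) : ℂ) * f x) μt := by
    refine Integrable.mono' (integrable_const (C/2))
      (hs2meas.mono_measure (Measure.restrict_mono hsub le_rfl)) ?_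
    filter_upwards [ae_restrict_mem measurableSet_Ioo] with x hx
    exact hbound x (hsub hx)
  have hint3 : Integrable (fun y => ((Real.sqrt t - Real.sqrt y : ℝ) : ℂ) * g₁ y) μt := by
    refine Integrable.mono' (hgi_t.norm.const_mul (Real.sqrt t))
      (((Complex.measurable_ofReal.comp
        (measurable_const.sub Real.continuous_sqrt.measurable)).aestronglyMeasurable).mul
        hg₁m.aestronglyMeasurable) ?_
    filter_upwards [ae_restrict_mem measurableSet_Ioo] with x hx
    rw [norm_mul, Complex.norm_real]
    refine mul_le_mul_of_nonneg_right ?_ (norm_nonneg _)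
    rw [Real.norm_of_nonneg (sub_nonneg.2 (Real.sqrt_le_sqrt hx.2.le))]
    have := Real.sqrt_nonneg x
    linarith
  -- compute the interval integral of h
  rw [intervalIntegral.integral_of_le ht.1, integral_Ioc_eq_integral_Ioo]
  have hsplit : ∫ x in Set.Ioo (0:ℝ) t, h x
      = (∫ x in Set.Ioo (0:ℝ) t, ((Real.sqrt x : ℝ) : ℂ) * g₁ x)
        + ∫ x in Set.Ioo (0:ℝ) t, (((2*Real.sqrt x)⁻¹ : ℝ) : ℂ) * f x := by
    rw [← integral_add hint1 hint2]
  rw [hsplit, aux_fubini f g₁ hg₁m hgi hac₁ ht, ← integral_add hint1 hint3]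
  have hcomb : ∀ x : ℝ, ((Real.sqrt x : ℝ) : ℂ) * g₁ x
      + ((Real.sqrt t - Real.sqrt x : ℝ) : ℂ) * g₁ x = (Real.sqrt t : ℂ) * g₁ x := by
    intro x; push_cast; ring
  simp_rw [hcomb]
  rw [integral_const_mul, ← hac₁ t ht]
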